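/- Fix f ∈ ℂ^Ñ and suppose there exists N₀ ∈ ℕ such that the restriction L_{N₀} of L to sequences supported on the first N₀ coordinates is surjective onto ℂ^Ñ. Let b̃_∞ ∈ ℓ² be the unique minimal-ℓ²-norm solution of Lb = f and set ũ_∞(x) = ∑_{n∈ℕ} d_n^{-1/2} b̃_{∞,n} e^{iω_n·x}. For each N_b ≥ N₀, let b̃^{(N_b)} ∈ ℂ^{N_b} be the unique minimal Euclidean-norm solution of the truncated system ∑_{n=1}^{N_b} d_n^{-1/2} b_n c_{k,n} = f_k (k = 1,…,Ñ), and set ũ_{N_b}(x) = ∑_{n=1}^{N_b} d_n^{-1/2} b̃^{(N_b)}_n e^{iω_n·x}. Then there exist a constant A > 0 and N₁ ≥ N₀ such that for all N_b ≥ N₁, sup_{x∈ℝ^m} |ũ_∞(x) − ũ_{N_b}(x)| ≤ A · (∑_{n > N_b} (1+‖ω_n‖₂)^{2p} d_n^{-1})^{1/2}. In particular, ũ_{N_b} → ũ_∞ uniformly on ℝ^m as N_b → ∞. -/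

import Mathlib

open scoped BigOperators ComplexInnerProductSpace ENNReal

lemma aux_inner_eq_zero_of_min {E : Type*} [NormedAddCommGroup E] [InnerProductSpace ℂ E]
    {v w : E} (h : ∀ t : ℂ, ‖v‖ ≤ ‖v + t • w‖) : ⟪w, v⟫ = 0 := by
  by_cases hw : w = 0
  · simp [hw]
  by_contra hne
  have hwpos : (0:ℝ) < ‖w‖ := norm_pos_iff.mpr hw
  have hw2 : (0:ℝ) < ‖w‖ ^ 2 := by positivity
  set α : ℂ := ⟪w, v⟫ with hα
  set t : ℂ := -(α / ((‖w‖ : ℂ) ^ 2)) with ht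
  have hle := h t
  have h1 : ⟪v, t • w⟫ = t * ⟪v, w⟫ := inner_smul_right _ _ _
  have h2 : ⟪v, w⟫ = starRingEnd ℂ α := (inner_conj_symm _ _).symm
  have hmc : α * starRingEnd ℂ α = ((‖α‖^2 : ℝ) : ℂ) := by
    rw [Complex.mul_conj]
    norm_cast
    rw [Complex.sq_norm]
  have h3 : t * starRingEnd ℂ α = ((-(‖α‖^2 / ‖w‖^2) : ℝ) : ℂ) := by
    rw [ht, neg_mul, div_mul_eq_mul_div, hmc]
    push_cast
    ring
  have h4 : ‖t • w‖ ^ 2 = ‖α‖^2/‖w‖^2 := by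
    rw [norm_smul, ht, norm_neg, norm_div, mul_pow, div_pow]
    have h5 : ‖((‖w‖:ℂ))^2‖ = ‖w‖^2 := by
      simp [norm_norm]
    rw [h5]
    field_simp
  have hsq : ‖v + t • w‖ ^ 2 = ‖v‖ ^ 2 - ‖α‖ ^ 2 / ‖w‖ ^ 2 := by
    rw [@norm_add_sq ℂ, h1, h2, h3, h4]
    have : RCLike.re (((-(‖α‖ ^ 2 / ‖w‖ ^ 2) : ℝ)) : ℂ) = -(‖α‖ ^ 2 / ‖w‖ ^ 2) :=
      Complex.ofReal_re _
    rw [this]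
    ring
  have hα0 : (0:ℝ) < ‖α‖^2 / ‖w‖^2 := by
    have : (0:ℝ) < ‖α‖ := norm_pos_iff.mpr hne
    positivity
  have hfin : ‖v‖ ^ 2 ≤ ‖v + t • w‖ ^ 2 := pow_le_pow_left₀ (norm_nonneg _) hle 2
  rw [hsq] at hfin
  linarith

lemma aux_rpow_two (x : ℝ) : x ^ ((2 : ℝ≥0∞).toReal) = x ^ (2:ℕ) := by
  have h : (2 : ℝ≥0∞).toReal = ((2:ℕ) : ℝ) := by norm_num
  rw [h, Real.rpow_natCast]

lemma aux_lp2_summable_sq (f : lp (fun _ : ℕ => ℂ) 2) :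
    Summable (fun n => ‖f n‖ ^ 2) := by
  have := (lp.memℓp f).summable (by norm_num : 0 < (2 : ℝ≥0∞).toReal)
  simpa [aux_rpow_two] using this

lemma aux_memℓp_two_of_le {f : ℕ → ℂ} {g : ℕ → ℝ}
    (hg : Summable fun n => g n ^ 2) (h : ∀ n, ‖f n‖ ≤ g n) : Memℓp f 2 := by
  apply memℓp_gen
  have : ∀ n, ‖f n‖ ^ ((2 : ℝ≥0∞).toReal) = ‖f n‖ ^ (2:ℕ) := fun n => aux_rpow_two _
  rw [funext this]
  exact Summable.of_nonneg_of_le (fun n => by positivity)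
    (fun n => pow_le_pow_left₀ (norm_nonneg _) (h n) 2) hg

lemma aux_lp2_norm_sq (f : lp (fun _ : ℕ => ℂ) 2) : ‖f‖ ^ 2 = ∑' n, ‖f n‖ ^ 2 := by
  have := lp.norm_rpow_eq_tsum (by norm_num : 0 < (2 : ℝ≥0∞).toReal) f
  simpa [aux_rpow_two] using this

lemma aux_lp2_norm_le {f : lp (fun _ : ℕ => ℂ) 2} {g : ℕ → ℝ}
    (hg : Summable fun n => g n ^ 2) (h : ∀ n, ‖f n‖ ≤ g n) :
    ‖f‖ ≤ Real.sqrt (∑' n, g n ^ 2) := by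
  have h1 : ‖f‖ ^ 2 ≤ ∑' n, g n ^ 2 := by
    rw [aux_lp2_norm_sq f]
    exact Summable.tsum_le_tsum (fun n => pow_le_pow_left₀ (norm_nonneg _) (h n) 2)
      (aux_lp2_summable_sq f) hg
  have := Real.sqrt_le_sqrt h1
  rwa [Real.sqrt_sq (norm_nonneg f)] at this

lemma aux_euclid_norm_le {N : ℕ} (v : EuclideanSpace ℂ (Fin N)) (C : ℝ) (hC : 0 ≤ C)
    (h : ∀ k, ‖v k‖ ≤ C) : ‖v‖ ≤ Real.sqrt N * C := by
  rw [EuclideanSpace.norm_eq]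
  have h1 : ∑ i, ‖v i‖ ^ 2 ≤ (N : ℝ) * C ^ 2 := by
    calc ∑ i, ‖v i‖ ^ 2 ≤ ∑ _i : Fin N, C ^ 2 :=
      Finset.sum_le_sum (fun i _ => pow_le_pow_left₀ (norm_nonneg _) (h i) 2)
    _ = (N : ℝ) * C ^ 2 := by simp [Finset.card_univ]
  calc Real.sqrt (∑ i, ‖v i‖ ^ 2) ≤ Real.sqrt ((N:ℝ) * C ^ 2) := Real.sqrt_le_sqrt h1
  _ = Real.sqrt N * C := by
      rw [Real.sqrt_mul (Nat.cast_nonneg N), Real.sqrt_sq hC]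

lemma aux_euclid_coord_le {N : ℕ} (z : EuclideanSpace ℂ (Fin N)) (k : Fin N) : ‖z k‖ ≤ ‖z‖ := by
  rw [EuclideanSpace.norm_eq]
  have h1 : ‖z k‖ ^ 2 ≤ ∑ i, ‖z i‖ ^ 2 :=
    Finset.single_le_sum (f := fun i => ‖z i‖ ^ 2) (fun i _ => by positivity) (Finset.mem_univ k)
  calc ‖z k‖ = Real.sqrt (‖z k‖ ^ 2) := (Real.sqrt_sq (norm_nonneg _)).symm
  _ ≤ _ := Real.sqrt_le_sqrt h1

lemma aux_tail_sum {wt : ℕ → ℝ} (hwt : ∀ n, 0 ≤ wt n) (hs : Summable wt) (M : ℕ) :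
    (∑ n ∈ Finset.range M, wt n) + (∑' n, if M ≤ n then wt n else 0) = ∑' n, wt n := by
  have hsum1 : Summable (fun n => if M ≤ n then wt n else 0) :=
    Summable.of_nonneg_of_le (fun n => by split <;> simp [hwt n])
      (fun n => by split <;> simp [hwt n]) hs
  have hsum2 : Summable (fun n => if M ≤ n then 0 else wt n) :=
    Summable.of_nonneg_of_le (fun n => by split <;> simp [hwt n])
      (fun n => by split <;> simp [hwt n]) hs
  have hsplit : ∀ n, wt n = (if M ≤ n then 0 else wt n) + (if M ≤ n then wt n else 0) := by
    intro n; split <;> simp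
  have h2 : (∑' n, if M ≤ n then 0 else wt n) = ∑ n ∈ Finset.range M, wt n := by
    rw [tsum_eq_sum (s := Finset.range M)]
    · apply Finset.sum_congr rfl
      intro n hn
      rw [if_neg]
      simpa using Finset.mem_range.mp hn
    · intro n hn
      rw [if_pos]
      exact Nat.le_of_not_lt (fun h => hn (Finset.mem_range.mpr h))
  calc (∑ n ∈ Finset.range M, wt n) + (∑' n, if M ≤ n then wt n else 0)
      = (∑' n, if M ≤ n then 0 else wt n) + (∑' n, if M ≤ n then wt n else 0) := by rw [h2]
    _ = ∑' n, wt n := by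
        rw [← Summable.tsum_add hsum2 hsum1]
        exact tsum_congr (fun n => (hsplit n).symm)

lemma aux_tail_tendsto {wt : ℕ → ℝ} (hwt : ∀ n, 0 ≤ wt n) (hs : Summable wt) :
    Filter.Tendsto (fun M => ∑' n, if M ≤ n then wt n else 0) Filter.atTop (nhds 0) := by
  have h1 : (fun M => ∑' n, if M ≤ n then wt n else 0)
      = fun M => (∑' n, wt n) - ∑ n ∈ Finset.range M, wt n := by
    funext M; linarith [aux_tail_sum hwt hs M]
  rw [h1]
  have h2 := Filter.Tendsto.sub (tendsto_const_nhds (x := ∑' n, wt n)) hs.hasSum.tendsto_sum_nat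
  simpa using h2

set_option maxHeartbeats 4000000 in
theorem truncated_basis_solutions_converge
    (m p N : ℕ) (hN : 1 ≤ N)
    (ω : ℕ → EuclideanSpace ℝ (Fin m))
    (d : ℕ → ℝ) (hd : ∀ n, 0 < d n)
    (hwd : Memℓp (fun n => (1 + ‖ω n‖) ^ p * d n ^ (-(1 : ℝ) / 2)) 2)
    (Bp : ℝ) (hBp : 0 < Bp)
    (c : Fin N → ℕ → ℂ)
    (hc : ∀ k n, ‖c k n‖ ≤ Bp * (1 + ‖ω n‖) ^ p)
    (L : lp (fun _ : ℕ => ℂ) 2 →L[ℂ] EuclideanSpace ℂ (Fin N))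
    (hL : ∀ b k, L b k = ∑' n, ((d n ^ (-(1 : ℝ) / 2) : ℝ) : ℂ) * b n * c k n)
    (U : lp (fun _ : ℕ => ℂ) 2 → EuclideanSpace ℝ (Fin m) → ℂ)
    (hU : ∀ b x, U b x = ∑' n, ((d n ^ (-(1 : ℝ) / 2) : ℝ) : ℂ) * b n *
      Complex.exp (Complex.I * ∑ j, (ω n j : ℂ) * (x j : ℂ)))
    (f : EuclideanSpace ℂ (Fin N))
    (N₀ : ℕ)
    (hsurj : ∀ f' : EuclideanSpace ℂ (Fin N), ∃ b : lp (fun _ : ℕ => ℂ) 2,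
      (∀ n, N₀ ≤ n → b n = 0) ∧ L b = f')
    (binf : lp (fun _ : ℕ => ℂ) 2)
    (hbinf : L binf = f ∧ ∀ b : lp (fun _ : ℕ => ℂ) 2, L b = f → ‖binf‖ ≤ ‖b‖)
    (btr : ℕ → lp (fun _ : ℕ => ℂ) 2)
    (hbtr : ∀ Nb, N₀ ≤ Nb →
      (∀ n, Nb ≤ n → btr Nb n = 0) ∧ L (btr Nb) = f ∧
      ∀ b : lp (fun _ : ℕ => ℂ) 2,
        (∀ n, Nb ≤ n → b n = 0) → L b = f → ‖btr Nb‖ ≤ ‖b‖) :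
    (∃ A > (0 : ℝ), ∃ N₁, N₀ ≤ N₁ ∧ ∀ Nb, N₁ ≤ Nb →
      ∀ x : EuclideanSpace ℝ (Fin m),
        ‖U binf x - U (btr Nb) x‖ ≤
          A * Real.sqrt (∑' n, if Nb ≤ n then (1 + ‖ω n‖) ^ (2 * p) * (d n)⁻¹ else 0)) ∧
    TendstoUniformly (fun Nb x => U (btr (max Nb N₀)) x) (U binf) Filter.atTop := by
  classical
  obtain ⟨hbinfL, hbinfmin⟩ := hbinf
  -- the weight sequence
  set g : ℕ → ℝ := fun n => (1 + ‖ω n‖) ^ p * d n ^ (-(1 : ℝ) / 2) with hgdef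
  have hgpos : ∀ n, 0 < g n := by
    intro n
    have h1 : (0:ℝ) < (1 + ‖ω n‖) ^ p := by positivity
    exact mul_pos h1 (Real.rpow_pos_of_pos (hd n) _)
  have hg2 : Summable fun n => g n ^ 2 := by
    have h := hwd.summable (by norm_num : 0 < (2 : ℝ≥0∞).toReal)
    have heq : ∀ n, ‖g n‖ ^ ((2 : ℝ≥0∞).toReal) = g n ^ 2 := by
      intro n
      rw [aux_rpow_two, Real.norm_eq_abs, abs_of_pos (hgpos n)]
    simpa [funext heq] using h
  set wt : ℕ → ℝ := fun n => (1 + ‖ω n‖) ^ (2 * p) * (d n)⁻¹ with hwtdef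
  have hwteq : ∀ n, wt n = g n ^ 2 := by
    intro n
    have h1 : (d n ^ (-(1:ℝ)/2)) ^ (2:ℕ) = (d n)⁻¹ := by
      rw [← Real.rpow_natCast (d n ^ (-(1:ℝ)/2)) 2, ← Real.rpow_mul (hd n).le]
      norm_num [Real.rpow_neg_one]
    have h2 : ((1 + ‖ω n‖) ^ p) ^ (2:ℕ) = (1 + ‖ω n‖) ^ (2 * p) := by
      rw [← pow_mul, mul_comm]
    calc wt n = ((1 + ‖ω n‖) ^ p) ^ (2:ℕ) * (d n ^ (-(1:ℝ)/2)) ^ (2:ℕ) := by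
          rw [h1, h2]
    _ = g n ^ 2 := by rw [hgdef]; ring
  have hwtnn : ∀ n, 0 ≤ wt n := fun n => by rw [hwteq n]; positivity
  have hwts : Summable wt := by
    rw [funext hwteq]; exact hg2
  set tail : ℕ → ℝ := fun M => ∑' n, if M ≤ n then wt n else 0 with htaildef
  have htailnn : ∀ M, 0 ≤ tail M := by
    intro M
    apply tsum_nonneg
    intro n; split <;> simp [hwtnn n]
  -- orthogonality of binf to the kernel
  have horth : ∀ z : lp (fun _ : ℕ => ℂ) 2, L z = 0 → ⟪z, binf⟫ = 0 := by
    intro z hz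
    apply aux_inner_eq_zero_of_min
    intro t
    apply hbinfmin
    rw [map_add, map_smul, hbinfL, hz, smul_zero, add_zero]
  -- binf is in the range of the adjoint
  obtain ⟨y, hy⟩ : ∃ y, (ContinuousLinearMap.adjoint L) y = binf := by
    set S : Submodule ℂ (lp (fun _ : ℕ => ℂ) 2) :=
      LinearMap.range ((ContinuousLinearMap.adjoint L :
        EuclideanSpace ℂ (Fin N) →ₗ[ℂ] lp (fun _ : ℕ => ℂ) 2)) with hS
    haveI : FiniteDimensional ℂ S := by
      apply LinearMap.finiteDimensional_range
    have hmem : binf ∈ Sᗮᗮ := by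
      intro u hu
      apply horth
      have hy : ∀ y' : EuclideanSpace ℂ (Fin N), ⟪y', L u⟫ = 0 := by
        intro y'
        have := hu ((ContinuousLinearMap.adjoint L) y') ⟨y', rfl⟩
        rwa [ContinuousLinearMap.adjoint_inner_left] at this
      have := hy (L u)
      rwa [inner_self_eq_zero] at this
    rw [Submodule.orthogonal_orthogonal] at hmem
    exact hmem
  -- norm of L applied to a single
  have hLsingle : ∀ n, ‖L (lp.single 2 n (1:ℂ))‖ ≤ Real.sqrt N * (Bp * g n) := by
    intro n
    apply aux_euclid_norm_le _ _ (mul_nonneg hBp.le (hgpos n).le)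
    intro k
    have hcomp : L (lp.single 2 n (1:ℂ)) k = ((d n ^ (-(1 : ℝ) / 2) : ℝ) : ℂ) * c k n := by
      rw [hL]
      rw [tsum_eq_single n]
      · rw [lp.single_apply_self]; ring
      · intro n' hn'
        rw [lp.single_apply_ne 2 n _ hn']
        ring
    rw [hcomp, norm_mul, Complex.norm_real, Real.norm_eq_abs,
      abs_of_pos (Real.rpow_pos_of_pos (hd n) _)]
    calc d n ^ (-(1:ℝ)/2) * ‖c k n‖ ≤ d n ^ (-(1:ℝ)/2) * (Bp * (1 + ‖ω n‖) ^ p) := by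
          apply mul_le_mul_of_nonneg_left (hc k n) (Real.rpow_pos_of_pos (hd n) _).le
    _ = Bp * g n := by rw [hgdef]; ring
  -- pointwise bound on binf
  set C₁ : ℝ := Real.sqrt N * Bp * ‖y‖ with hC₁def
  have hC₁nn : 0 ≤ C₁ := by positivity
  have hbinfbd : ∀ n, ‖binf n‖ ≤ C₁ * g n := by
    intro n
    have h1 : binf n = ⟪lp.single 2 n (1:ℂ), binf⟫ := by
      rw [lp.inner_single_left]
      simp [RCLike.inner_apply]
    have h2 : (⟪lp.single 2 n (1:ℂ), binf⟫ : ℂ) = ⟪L (lp.single 2 n (1:ℂ)), y⟫ := by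
      rw [← hy, ContinuousLinearMap.adjoint_inner_right]
    rw [h1, h2]
    calc ‖(⟪L (lp.single 2 n (1:ℂ)), y⟫ : ℂ)‖ ≤ ‖L (lp.single 2 n (1:ℂ))‖ * ‖y‖ :=
      norm_inner_le_norm _ _
    _ ≤ (Real.sqrt N * (Bp * g n)) * ‖y‖ :=
      mul_le_mul_of_nonneg_right (hLsingle n) (norm_nonneg _)
    _ = C₁ * g n := by rw [hC₁def]; ring
  -- correction vectors
  choose v hv0 hvL using fun k : Fin N => hsurj (EuclideanSpace.single k (1:ℂ))
  set C₂ : ℝ := ∑ k, ‖v k‖ with hC₂def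
  have hC₂nn : 0 ≤ C₂ := Finset.sum_nonneg (fun k _ => norm_nonneg _)
  set corr : EuclideanSpace ℂ (Fin N) → lp (fun _ : ℕ => ℂ) 2 :=
    fun z => ∑ k, z k • v k with hcorrdef
  have hcorrL : ∀ z, L (corr z) = z := by
    intro z
    rw [hcorrdef]
    simp only [map_sum, map_smul, hvL]
    ext i
    rw [WithLp.ofLp_sum, Finset.sum_apply]
    simp [EuclideanSpace.single_apply]
  have hcorr0 : ∀ z n, N₀ ≤ n → corr z n = 0 := by
    intro z n hn
    rw [hcorrdef]
    have : ((∑ k, z k • v k : lp (fun _ : ℕ => ℂ) 2) : ℕ → ℂ) n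
        = ∑ k, (z k • v k : lp (fun _ : ℕ => ℂ) 2) n := by
      rw [lp.coeFn_sum]
      exact Finset.sum_apply _ _ _
    rw [this]
    apply Finset.sum_eq_zero
    intro k _
    rw [lp.coeFn_smul, Pi.smul_apply, hv0 k n hn, smul_zero]
  have hcorrnorm : ∀ z, ‖corr z‖ ≤ C₂ * ‖z‖ := by
    intro z
    rw [hcorrdef]
    calc ‖∑ k, z k • v k‖ ≤ ∑ k, ‖z k • v k‖ := norm_sum_le _ _
    _ = ∑ k, ‖z k‖ * ‖v k‖ := by simp [norm_smul]
    _ ≤ ∑ k, ‖z‖ * ‖v k‖ := Finset.sum_le_sum (fun k _ =>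
        mul_le_mul_of_nonneg_right (aux_euclid_coord_le z k) (norm_nonneg _))
    _ = C₂ * ‖z‖ := by
        rw [hC₂def, Finset.sum_mul]
        all_goals exact Finset.sum_congr rfl (fun k _ => mul_comm _ _)
  -- the key distance bound
  set C₃ : ℝ := (1 + C₂ * ‖L‖) * C₁ with hC₃def
  have hC₃nn : 0 ≤ C₃ := by positivity
  have hkey : ∀ Nb, N₀ ≤ Nb → ‖binf - btr Nb‖ ≤ C₃ * Real.sqrt (tail Nb) := by
    intro Nb hNb
    obtain ⟨hb0, hbL, hbmin⟩ := hbtr Nb hNb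
    -- the truncation of binf
    have htrmem : Memℓp (fun n => if n < Nb then binf n else 0) 2 := by
      apply aux_memℓp_two_of_le (aux_lp2_summable_sq binf)
      intro n
      split <;> simp
    set trunc : lp (fun _ : ℕ => ℂ) 2 := ⟨fun n => if n < Nb then binf n else 0, htrmem⟩
      with htruncdef
    set tl : lp (fun _ : ℕ => ℂ) 2 := binf - trunc with htldef
    have htl : ∀ n, tl n = if Nb ≤ n then binf n else 0 := by
      intro n
      have h1 : tl n = binf n - (if n < Nb then binf n else 0) := by
        rw [htldef, lp.coeFn_sub, Pi.sub_apply]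
      rw [h1]
      by_cases h : n < Nb
      · rw [if_pos h, if_neg (by omega), sub_self]
      · rw [if_neg h, if_pos (by omega), sub_zero]
    have htlnorm : ‖tl‖ ≤ C₁ * Real.sqrt (tail Nb) := by
      have hb : ∀ n, ‖tl n‖ ≤ (fun n => if Nb ≤ n then C₁ * g n else 0) n := by
        intro n
        rw [htl n]
        by_cases h : Nb ≤ n
        · simp only [if_pos h]
          exact hbinfbd n
        · simp [if_neg h]
      have hs2 : Summable (fun n => ((fun n => if Nb ≤ n then C₁ * g n else 0) n) ^ 2) := by
        apply Summable.of_nonneg_of_le (fun n => by positivity)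
          (fun n => ?_) (hg2.mul_left (C₁^2))
        by_cases h : Nb ≤ n
        · have heq : ((fun n => if Nb ≤ n then C₁ * g n else 0) n) ^ 2
              = C₁ ^ 2 * g n ^ 2 := by
            simp only [if_pos h]; ring
          rw [heq]
        · have h0 : (0:ℝ) ≤ C₁ ^ 2 * g n ^ 2 := by positivity
          simpa [if_neg h] using h0
      have h3 := aux_lp2_norm_le hs2 hb
      have h4 : (∑' n, ((fun n => if Nb ≤ n then C₁ * g n else 0) n) ^ 2)
          = C₁ ^ 2 * tail Nb := by
        rw [htaildef]
        rw [← tsum_mul_left]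
        apply tsum_congr
        intro n
        by_cases h : Nb ≤ n
        · simp only [if_pos h, mul_pow, hwteq n]
        · simp [if_neg h]
      rw [h4] at h3
      calc ‖tl‖ ≤ Real.sqrt (C₁ ^ 2 * tail Nb) := h3
      _ = C₁ * Real.sqrt (tail Nb) := by
          rw [Real.sqrt_mul (sq_nonneg C₁), Real.sqrt_sq hC₁nn]
    -- the competitor
    set b'' : lp (fun _ : ℕ => ℂ) 2 := trunc + corr (L tl) with hb''def
    have htr2 : trunc = binf - tl := by rw [htldef]; abel
    have hb''L : L b'' = f := by
      rw [hb''def, map_add, hcorrL, htr2, map_sub, hbinfL]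
      abel
    have hb''0 : ∀ n, Nb ≤ n → b'' n = 0 := by
      intro n hn
      rw [hb''def]
      have h1 : (b'' : ℕ → ℂ) n = trunc n + corr (L tl) n := by
        rw [hb''def, lp.coeFn_add, Pi.add_apply]
      rw [← hb''def, h1, htruncdef]
      have h2 : (⟨fun n => if n < Nb then binf n else 0, htrmem⟩ :
          lp (fun _ : ℕ => ℂ) 2) n = if n < Nb then binf n else 0 := rfl
      rw [← htruncdef] at h2
      rw [h2, if_neg (by omega), hcorr0 _ n (le_trans hNb hn), add_zero]
    -- orthogonality
    set w : lp (fun _ : ℕ => ℂ) 2 := b'' - btr Nb with hwdef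
    set q : lp (fun _ : ℕ => ℂ) 2 := binf - btr Nb with hqdef
    have hwker : L w = 0 := by rw [hwdef, map_sub, hb''L, hbL, sub_self]
    have hw0 : ∀ n, Nb ≤ n → w n = 0 := by
      intro n hn
      have h1 : w n = b'' n - btr Nb n := by
        rw [hwdef, lp.coeFn_sub, Pi.sub_apply]
      rw [h1, hb''0 n hn, hb0 n hn, sub_self]
    have hw_binf : ⟪w, binf⟫ = 0 := horth w hwker
    have hw_btr : ⟪w, btr Nb⟫ = 0 := by
      apply aux_inner_eq_zero_of_min
      intro t
      apply hbmin
      · intro n hn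
        have h1 : (btr Nb + t • w) n = btr Nb n + t • w n := by
          rw [lp.coeFn_add, Pi.add_apply, lp.coeFn_smul, Pi.smul_apply]
        rw [h1, hb0 n hn, hw0 n hn, smul_zero, add_zero]
      · rw [map_add, map_smul, hwker, smul_zero, add_zero, hbL]
    have hwq : ⟪w, q⟫ = 0 := by
      rw [hqdef, inner_sub_right, hw_binf, hw_btr, sub_zero]
    have hqw : ⟪q, w⟫ = 0 := by
      rw [← inner_conj_symm, hwq, map_zero]
    have hqle : ‖q‖ ≤ ‖q - w‖ := by
      have h1 : ‖q - w‖ ^ 2 = ‖q‖ ^ 2 - 2 * RCLike.re (⟪q, w⟫ : ℂ) + ‖w‖ ^ 2 :=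
        @norm_sub_sq ℂ _ _ _ _ q w
      rw [hqw] at h1
      simp only [map_zero, mul_zero, sub_zero] at h1
      have h2 : ‖q‖ ^ 2 ≤ ‖q - w‖ ^ 2 := by
        rw [h1]
        have : (0:ℝ) ≤ ‖w‖ ^ 2 := sq_nonneg _
        linarith
      have h3 := Real.sqrt_le_sqrt h2
      rwa [Real.sqrt_sq (norm_nonneg _), Real.sqrt_sq (norm_nonneg _)] at h3
    have hdiff : q - w = tl - corr (L tl) := by
      rw [hqdef, hwdef, hb''def, htr2]
      abel
    calc ‖binf - btr Nb‖ = ‖q‖ := by rw [hqdef]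
    _ ≤ ‖q - w‖ := hqle
    _ = ‖tl - corr (L tl)‖ := by rw [hdiff]
    _ ≤ ‖tl‖ + ‖corr (L tl)‖ := norm_sub_le _ _
    _ ≤ ‖tl‖ + C₂ * ‖L tl‖ := by linarith [hcorrnorm (L tl)]
    _ ≤ ‖tl‖ + C₂ * (‖L‖ * ‖tl‖) := by
        have := L.le_opNorm tl
        nlinarith [hC₂nn]
    _ = (1 + C₂ * ‖L‖) * ‖tl‖ := by ring
    _ ≤ (1 + C₂ * ‖L‖) * (C₁ * Real.sqrt (tail Nb)) := by
        apply mul_le_mul_of_nonneg_left htlnorm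
        have h := mul_nonneg hC₂nn (norm_nonneg L)
        linarith
    _ = C₃ * Real.sqrt (tail Nb) := by rw [hC₃def]; ring
  -- the sup-norm bound via Cauchy-Schwarz
  set G : ℝ := Real.sqrt (∑' n, g n ^ 2) with hGdef
  have hGnn : 0 ≤ G := Real.sqrt_nonneg _
  have hUdiff : ∀ (a b : lp (fun _ : ℕ => ℂ) 2) (x : EuclideanSpace ℝ (Fin m)),
      ‖U a x - U b x‖ ≤ G * ‖a - b‖ := by
    intro a b x
    set A : ℕ → ℂ := fun n => ((d n ^ (-(1 : ℝ) / 2) : ℝ) : ℂ) *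
      Complex.exp (Complex.I * ∑ j, (ω n j : ℂ) * (x j : ℂ)) with hAdef
    have hexp : ∀ n, ‖Complex.exp (Complex.I * ∑ j, (ω n j : ℂ) * (x j : ℂ))‖ = 1 := by
      intro n
      have h : (∑ j, (ω n j : ℂ) * (x j : ℂ)) = ((∑ j, ω n j * x j : ℝ) : ℂ) := by
        push_cast; ring
      rw [h, Complex.norm_exp]
      simp [Complex.mul_re]
    have hAnorm : ∀ n, ‖(starRingEnd ℂ) (A n)‖ ≤ g n := by
      intro n
      rw [RCLike.norm_conj, hAdef]
      simp only
      rw [norm_mul, hexp n, mul_one, Complex.norm_real, Real.norm_eq_abs,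
        abs_of_pos (Real.rpow_pos_of_pos (hd n) _)]
      rw [hgdef]
      have h1 : (1:ℝ) ≤ (1 + ‖ω n‖) ^ p :=
        one_le_pow₀ (le_add_of_nonneg_right (norm_nonneg _))
      calc d n ^ (-(1:ℝ)/2) = 1 * d n ^ (-(1:ℝ)/2) := by ring
      _ ≤ (1 + ‖ω n‖) ^ p * d n ^ (-(1:ℝ)/2) :=
        mul_le_mul_of_nonneg_right h1 (Real.rpow_pos_of_pos (hd n) _).le
    set wx : lp (fun _ : ℕ => ℂ) 2 :=
      ⟨fun n => (starRingEnd ℂ) (A n), aux_memℓp_two_of_le hg2 hAnorm⟩ with hwxdef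
    have hwxnorm : ‖wx‖ ≤ G := aux_lp2_norm_le hg2 hAnorm
    have hrepr : ∀ bb : lp (fun _ : ℕ => ℂ) 2, U bb x = ⟪wx, bb⟫ := by
      intro bb
      rw [hU, lp.inner_eq_tsum]
      apply tsum_congr
      intro n
      have h1 : (⟪wx n, bb n⟫ : ℂ) = (starRingEnd ℂ) (wx n) * bb n := by
        rw [RCLike.inner_apply]; ring
      have h2 : wx n = (starRingEnd ℂ) (A n) := rfl
      rw [h1, h2, Complex.conj_conj, hAdef]
      ring
    rw [hrepr a, hrepr b, ← inner_sub_right]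
    calc ‖(⟪wx, a - b⟫ : ℂ)‖ ≤ ‖wx‖ * ‖a - b‖ := norm_inner_le_norm _ _
    _ ≤ G * ‖a - b‖ := mul_le_mul_of_nonneg_right hwxnorm (norm_nonneg _)
  -- the combined bound
  have hbound : ∀ Nb, N₀ ≤ Nb → ∀ x : EuclideanSpace ℝ (Fin m),
      ‖U binf x - U (btr Nb) x‖ ≤ (G * C₃) * Real.sqrt (tail Nb) := by
    intro Nb hNb x
    calc ‖U binf x - U (btr Nb) x‖ ≤ G * ‖binf - btr Nb‖ := hUdiff _ _ x
    _ ≤ G * (C₃ * Real.sqrt (tail Nb)) :=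
      mul_le_mul_of_nonneg_left (hkey Nb hNb) hGnn
    _ = (G * C₃) * Real.sqrt (tail Nb) := by ring
  constructor
  · refine ⟨G * C₃ + 1, by positivity, N₀, le_refl _, ?_⟩
    intro Nb hNb x
    have h1 := hbound Nb hNb x
    have h2 : Real.sqrt (tail Nb) ≥ 0 := Real.sqrt_nonneg _
    have h3 : (G * C₃) * Real.sqrt (tail Nb) ≤ (G * C₃ + 1) * Real.sqrt (tail Nb) := by
      nlinarith
    calc ‖U binf x - U (btr Nb) x‖ ≤ (G * C₃) * Real.sqrt (tail Nb) := h1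
    _ ≤ (G * C₃ + 1) * Real.sqrt (tail Nb) := h3
  · rw [Metric.tendstoUniformly_iff]
    intro ε hε
    have h1 : Filter.Tendsto tail Filter.atTop (nhds 0) := aux_tail_tendsto hwtnn hwts
    have h2 : Filter.Tendsto (fun Nb : ℕ => max Nb N₀) Filter.atTop Filter.atTop :=
      Filter.tendsto_atTop_mono (fun n => le_max_left n N₀) Filter.tendsto_id
    have h3 : Filter.Tendsto (fun Nb : ℕ => tail (max Nb N₀)) Filter.atTop (nhds 0) :=
      h1.comp h2
    have h4 : Filter.Tendsto (fun Nb : ℕ => Real.sqrt (tail (max Nb N₀)))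
        Filter.atTop (nhds 0) := by
      have := (Real.continuous_sqrt.tendsto 0).comp h3
      simpa [Function.comp_def] using this
    have h5 : Filter.Tendsto (fun Nb : ℕ => (G * C₃) * Real.sqrt (tail (max Nb N₀)))
        Filter.atTop (nhds 0) := by
      have := h4.const_mul (G * C₃)
      simpa using this
    filter_upwards [h5.eventually (gt_mem_nhds hε)] with n hn x
    rw [dist_eq_norm]
    calc ‖U binf x - U (btr (max n N₀)) x‖
        ≤ (G * C₃) * Real.sqrt (tail (max n N₀)) := hbound _ (le_max_right n N₀) x
    _ < ε := hn
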